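/- Let u : ℕ → ℤ satisfy an order-d integer linear recurrence u_{n+d} = a_{d-1} u_{n+d-1} + … + a_0 u_n, let p be a prime with p > d+1 and p ∤ a_0, let A be the companion matrix of the recurrence, and let M be a positive integer with A^M ≡ I (mod p). Then for every ℓ ∈ {0, …, M−1}, either u_{Mn+ℓ} = 0 for all n ∈ ℕ, or the set {n ∈ ℕ : u_{Mn+ℓ} = 0} has at most d − 1 elements. -/

import Mathlib

open Finset

/-- The companion matrix of the linear recurrence with coefficients `a_0, …, a_{d-1}`
(where `u_{n+d} = a_{d-1} u_{n+d-1} + … + a_0 u_n`): its first row is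
`(a_{d-1}, …, a_1, a_0)`, its subdiagonal entries are `1` and all other entries are `0`. -/
def companionMatrix {d : ℕ} (a : Fin d → ℤ) : Matrix (Fin d) (Fin d) ℤ :=
  Matrix.of fun i j =>
    if (i : ℕ) = 0 then a j.rev else if (j : ℕ) + 1 = (i : ℕ) then 1 else 0

namespace LRSAux

open Filter


variable {p : ℕ} [hp : Fact p.Prime]

lemma summable_of_norm_vanish {ι : Type*} (f : ι → ℚ_[p])
    (h : ∀ ε : ℝ, 0 < ε → {i | ε ≤ ‖f i‖}.Finite) : Summable f := by
  apply NonarchimedeanAddGroup.summable_of_tendsto_cofinite_zero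
  rw [Metric.tendsto_nhds]
  intro ε hε
  rw [Filter.eventually_cofinite]
  refine (h ε hε).subset ?_
  intro i hi
  simp only [Set.mem_setOf_eq, dist_zero_right, not_lt] at hi ⊢
  exact hi

lemma norm_tsum_le {ι : Type*} (f : ι → ℚ_[p]) {C : ℝ} (hC : 0 ≤ C)
    (h : ∀ i, ‖f i‖ ≤ C) : ‖∑' i, f i‖ ≤ C :=
  IsUltrametricDist.norm_tsum_le_of_forall_le_of_nonneg hC h

lemma norm_le_pow_pred_of_lt {z : ℚ_[p]} {m : ℤ} (h : ‖z‖ < (p : ℝ) ^ m) :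
    ‖z‖ ≤ (p : ℝ) ^ (m - 1) := by
  have hp1 : (1 : ℝ) < (p : ℝ) := by exact_mod_cast hp.out.one_lt
  rcases eq_or_ne z 0 with rfl | hz
  · simp only [norm_zero]
    positivity
  · rw [Padic.norm_eq_zpow_neg_valuation hz] at h ⊢
    rw [zpow_lt_zpow_iff_right₀ hp1] at h
    exact zpow_le_zpow_right₀ (le_of_lt hp1) (by omega)

lemma norm_mul_pow_le {c x : ℚ_[p]} (hx : ‖x‖ ≤ 1) (j : ℕ) : ‖c * x ^ j‖ ≤ ‖c‖ := by
  rw [norm_mul, norm_pow]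
  calc ‖c‖ * ‖x‖ ^ j ≤ ‖c‖ * 1 := by
        gcongr
        exact pow_le_one₀ (norm_nonneg _) hx
  _ = ‖c‖ := mul_one _

lemma summable_series {c : ℕ → ℚ_[p]} (hdec : ∀ ε : ℝ, 0 < ε → ∃ J, ∀ j, J ≤ j → ‖c j‖ ≤ ε)
    {x : ℚ_[p]} (hx : ‖x‖ ≤ 1) : Summable fun j => c j * x ^ j := by
  apply summable_of_norm_vanish
  intro ε hε
  obtain ⟨J, hJ⟩ := hdec (ε / 2) (by linarith)
  refine (Set.finite_Iio J).subset ?_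
  intro j hj
  simp only [Set.mem_setOf_eq] at hj
  by_contra hlt
  simp only [Set.mem_Iio, not_lt] at hlt
  have h1 : ‖c j * x ^ j‖ ≤ ε / 2 := (norm_mul_pow_le hx j).trans (hJ j hlt)
  linarith

lemma summable_series_shift {c : ℕ → ℚ_[p]}
    (hdec : ∀ ε : ℝ, 0 < ε → ∃ J, ∀ j, J ≤ j → ‖c j‖ ≤ ε)
    {x : ℚ_[p]} (hx : ‖x‖ ≤ 1) (i : ℕ) : Summable fun m => c (i + 1 + m) * x ^ m := by
  refine summable_series (c := fun m => c (i + 1 + m)) ?_ hx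
  intro ε hε
  obtain ⟨J, hJ⟩ := hdec ε hε
  exact ⟨J, fun j hj => hJ _ (by omega)⟩

lemma series_factor {c : ℕ → ℚ_[p]} (hdec : ∀ ε : ℝ, 0 < ε → ∃ J, ∀ j, J ≤ j → ‖c j‖ ≤ ε)
    {x y : ℚ_[p]} (hx : ‖x‖ ≤ 1) (hy : ‖y‖ ≤ 1) :
    (∑' j, c j * y ^ j) - (∑' j, c j * x ^ j)
      = (y - x) * ∑' i, (∑' m, c (i + 1 + m) * x ^ m) * y ^ i := by
  classical
  set G : ℕ → ℕ → ℚ_[p] := fun j i => if i < j then c j * (y ^ i * x ^ (j - 1 - i)) else 0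
    with hGdef
  have hGbound : ∀ j i, ‖G j i‖ ≤ ‖c j‖ := by
    intro j i
    rw [hGdef]
    dsimp only
    split
    · rw [norm_mul, norm_mul, norm_pow, norm_pow]
      calc ‖c j‖ * (‖y‖ ^ i * ‖x‖ ^ (j - 1 - i)) ≤ ‖c j‖ * (1 * 1) := by
            gcongr
            · exact pow_le_one₀ (norm_nonneg _) hy
            · exact pow_le_one₀ (norm_nonneg _) hx
      _ = ‖c j‖ := by ring
    · simp
  have hsumG : Summable (Function.uncurry G) := by
    apply summable_of_norm_vanish
    intro ε hε
    obtain ⟨J, hJ⟩ := hdec (ε / 2) (by linarith)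
    refine ((Set.finite_Iio J).prod (Set.finite_Iio J)).subset ?_
    rintro ⟨j, i⟩ hji
    simp only [Set.mem_setOf_eq, Function.uncurry_apply_pair] at hji
    by_contra hout
    simp only [Set.mem_prod, Set.mem_Iio, not_and_or, not_lt] at hout
    have hj : J ≤ j ∨ ¬ i < j := by
      rcases hout with h | h
      · exact Or.inl h
      · rcases Nat.lt_or_ge i j with hij | hij
        · exact Or.inl (le_trans h (le_of_lt hij))
        · exact Or.inr (not_lt.mpr hij)
    rcases hj with hj | hj
    · have := hji.trans ((hGbound j i).trans (hJ j hj))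
      linarith
    · have hzero : G j i = 0 := if_neg hj
      rw [hzero, norm_zero] at hji
      linarith
  have hrow : ∀ j, Summable (G j) := by
    intro j
    refine summable_of_ne_finset_zero (s := Finset.range j) fun i hi => if_neg (by simpa using hi)
  have hcol : ∀ i, Summable fun j => G j i := by
    intro i
    apply summable_of_norm_vanish
    intro ε hε
    obtain ⟨J, hJ⟩ := hdec (ε / 2) (by linarith)
    refine (Set.finite_Iio J).subset ?_
    intro j hj
    simp only [Set.mem_setOf_eq] at hj
    by_contra hout
    simp only [Set.mem_Iio, not_lt] at hout
    have := hj.trans ((hGbound j i).trans (hJ j hout))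
    linarith
  have hs1 : Summable fun j => c j * y ^ j := summable_series hdec hy
  have hs2 : Summable fun j => c j * x ^ j := summable_series hdec hx
  have hsub : ∀ j, c j * y ^ j - c j * x ^ j = (y - x) * ∑' i, G j i := by
    intro j
    have hts : ∑' i, G j i = ∑ i ∈ range j, (c j * (y ^ i * x ^ (j - 1 - i))) := by
      rw [tsum_eq_sum (s := range j) (fun i hi => if_neg (by simpa using hi))]
      exact Finset.sum_congr rfl fun i hi => if_pos (by simpa using hi)
    rw [hts, ← Finset.mul_sum]
    have hgeo := geom_sum₂_mul y x j
    have hkey : c j * y ^ j - c j * x ^ j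
        = c j * ((∑ i ∈ range j, y ^ i * x ^ (j - 1 - i)) * (y - x)) := by
      rw [hgeo]
      ring
    rw [hkey]
    ring
  calc (∑' j, c j * y ^ j) - ∑' j, c j * x ^ j
      = ∑' j, (c j * y ^ j - c j * x ^ j) := (Summable.tsum_sub hs1 hs2).symm
    _ = ∑' j, (y - x) * ∑' i, G j i := tsum_congr hsub
    _ = (y - x) * ∑' j, ∑' i, G j i := tsum_mul_left
    _ = (y - x) * ∑' i, ∑' j, G j i := by rw [Summable.tsum_comm' hsumG hrow hcol]
    _ = (y - x) * ∑' i, (∑' m, c (i + 1 + m) * x ^ m) * y ^ i := by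
        congr 1
        apply tsum_congr
        intro i
        rw [← tsum_mul_right]
        refine tsum_eq_tsum_of_ne_zero_bij
          (f := fun j => G j i) (g := fun m => c (i + 1 + m) * x ^ m * y ^ i)
          (fun m => i + 1 + (m : ℕ)) ?_ ?_ ?_
        · intro m1 m2 h
          have h' : i + 1 + (m1 : ℕ) = i + 1 + (m2 : ℕ) := h
          exact Subtype.ext (by omega)
        · intro j hj
          have hij : i < j := by
            by_contra h
            exact hj (if_neg h)
          refine ⟨⟨j - 1 - i, ?_⟩, show i + 1 + (j - 1 - i) = j by omega⟩
          simp only [Function.mem_support]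
          intro h0
          apply hj
          have hidx : i + 1 + (j - 1 - i) = j := by omega
          rw [hGdef]
          dsimp only
          rw [if_pos hij]
          calc c j * (y ^ i * x ^ (j - 1 - i)) = c (i + 1 + (j - 1 - i)) * x ^ (j - 1 - i) * y ^ i := by
                rw [hidx]; ring
          _ = 0 := h0
        · rintro ⟨m, hm⟩
          simp only
          rw [hGdef]
          dsimp only
          rw [if_pos (by omega)]
          have hidx : i + 1 + m - 1 - i = m := by omega
          rw [hidx]
          ring

def zeroSet (c : ℕ → ℚ_[p]) : Set ℚ_[p] := {x | ‖x‖ ≤ 1 ∧ ∑' j, c j * x ^ j = 0}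

theorem strassmann (N : ℕ) : ∀ (c : ℕ → ℚ_[p]) (r : ℝ), 0 < r →
    (∀ ε : ℝ, 0 < ε → ∃ J, ∀ j, J ≤ j → ‖c j‖ ≤ ε) →
    (∀ j, ‖c j‖ ≤ r) → (∀ j, N < j → ‖c j‖ ≤ r / p) → ‖c N‖ = r →
    (zeroSet c).Finite ∧ (zeroSet c).ncard ≤ N := by
  have hp1 : (1 : ℝ) < (p : ℝ) := by exact_mod_cast hp.out.one_lt
  induction N with
  | zero =>
    intro c r hr hdec _ htail hN
    have hz : zeroSet c = ∅ := by
      by_contra hne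
      obtain ⟨x, hx1, hx2⟩ := Set.nonempty_iff_ne_empty.mpr hne
      have hs : Summable fun j => c j * x ^ j := summable_series hdec hx1
      have h0 : (0 : ℚ_[p]) = c 0 * x ^ 0 + ∑' j, c (j + 1) * x ^ (j + 1) := by
        rw [← hx2]
        exact Summable.tsum_eq_zero_add hs
      have hc0 : c 0 = - ∑' j, c (j + 1) * x ^ (j + 1) := by
        rw [pow_zero, mul_one] at h0
        linear_combination -h0
      have htn : ‖c 0‖ ≤ r / p := by
        rw [hc0, norm_neg]
        refine norm_tsum_le _ (by positivity) fun j => ?_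
        exact (norm_mul_pow_le hx1 _).trans (htail (j + 1) (Nat.succ_pos j))
      rw [hN] at htn
      have : r / p < r := by
        rw [div_lt_iff₀ (by linarith)]
        nlinarith
      linarith
    rw [hz]
    simp
  | succ N ih =>
    intro c r hr hdec hle htail hN
    by_cases hz : zeroSet c = ∅
    · rw [hz]
      simp
    obtain ⟨x, hx1, hx2⟩ := Set.nonempty_iff_ne_empty.mpr hz
    set b : ℕ → ℚ_[p] := fun i => ∑' m, c (i + 1 + m) * x ^ m with hb
    have hbdec : ∀ ε : ℝ, 0 < ε → ∃ J, ∀ i, J ≤ i → ‖b i‖ ≤ ε := by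
      intro ε hε
      obtain ⟨J, hJ⟩ := hdec ε hε
      exact ⟨J, fun i hi => norm_tsum_le _ (le_of_lt hε) fun m =>
        (norm_mul_pow_le hx1 _).trans (hJ _ (by omega))⟩
    have hble : ∀ i, ‖b i‖ ≤ r := fun i => norm_tsum_le _ (le_of_lt hr) fun m =>
      (norm_mul_pow_le hx1 _).trans (hle _)
    have hbtail : ∀ i, N < i → ‖b i‖ ≤ r / p := fun i hi =>
      norm_tsum_le _ (by positivity) fun m =>
        (norm_mul_pow_le hx1 _).trans (htail _ (by omega))
    have hrpr : r / p < r := by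
      rw [div_lt_iff₀ (by linarith)]
      nlinarith
    have hbN : ‖b N‖ = r := by
      have hsN : Summable fun m => c (N + 1 + m) * x ^ m := summable_series_shift hdec hx1 N
      have hsplit : b N = c (N + 1) + ∑' m, c (N + 1 + (m + 1)) * x ^ (m + 1) := by
        rw [hb]
        dsimp only
        rw [Summable.tsum_eq_zero_add hsN]
        norm_num
      have htn : ‖∑' m, c (N + 1 + (m + 1)) * x ^ (m + 1)‖ ≤ r / p :=
        norm_tsum_le _ (by positivity) fun m =>
          (norm_mul_pow_le hx1 _).trans (htail _ (by omega))
      rw [hsplit]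
      have hne : ‖c (N + 1)‖ ≠ ‖∑' m, c (N + 1 + (m + 1)) * x ^ (m + 1)‖ := by
        rw [hN]
        intro hcontra
        rw [← hcontra] at htn
        linarith
      rw [IsUltrametricDist.norm_add_eq_max_of_norm_ne_norm hne, hN]
      exact max_eq_left (by linarith)
    have hsubset : zeroSet c ⊆ insert x (zeroSet b) := by
      rintro y ⟨hy1, hy2⟩
      rcases eq_or_ne y x with rfl | hyx
      · exact Set.mem_insert _ _
      · refine Set.mem_insert_of_mem _ ⟨hy1, ?_⟩
        have hfac := series_factor hdec hx1 hy1
        rw [hy2, hx2, sub_zero] at hfac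
        rcases mul_eq_zero.mp hfac.symm with h | h
        · exact absurd (sub_eq_zero.mp h) hyx
        · exact h
    obtain ⟨hfin, hcard⟩ := ih b r hr hbdec hble hbtail hbN
    refine ⟨(hfin.insert x).subset hsubset, ?_⟩
    calc (zeroSet c).ncard ≤ (insert x (zeroSet b)).ncard :=
        Set.ncard_le_ncard hsubset (hfin.insert x)
    _ ≤ (zeroSet b).ncard + 1 := Set.ncard_insert_le x _
    _ ≤ N + 1 := by omega



lemma norm_int_le {t : ℤ} {m : ℕ} (h : (p : ℤ) ^ m ∣ t) :
    ‖(t : ℚ_[p])‖ ≤ (p : ℝ) ^ (-(m : ℤ)) :=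
  (Padic.norm_int_le_pow_iff_dvd t m).mpr h

lemma norm_natCast_eq (n : ℕ) (hn : n ≠ 0) :
    ‖((n : ℤ) : ℚ_[p])‖ = (p : ℝ) ^ (-(n.factorization p : ℤ)) := by
  have h1 : n = p ^ n.factorization p * (n / p ^ n.factorization p) :=
    (Nat.ordProj_mul_ordCompl_eq_self n p).symm
  have h2 : ¬ ((p : ℤ) ∣ ((n / p ^ n.factorization p : ℕ) : ℤ)) := by
    rw [Int.natCast_dvd_natCast]
    exact Nat.not_dvd_ordCompl hp.out hn
  have hnorm1 : ‖(((n / p ^ n.factorization p : ℕ) : ℤ) : ℚ_[p])‖ = 1 := by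
    have hle := Padic.norm_int_le_one (p := p) ((n / p ^ n.factorization p : ℕ) : ℤ)
    rcases lt_or_eq_of_le hle with h | h
    · exact absurd (Padic.norm_intCast_lt_one_iff.mp h) h2
    · exact h
  have hsplit : ((n : ℤ) : ℚ_[p]) = ((p : ℚ_[p])) ^ (n.factorization p)
      * (((n / p ^ n.factorization p : ℕ) : ℤ) : ℚ_[p]) := by
    have h3 : (n : ℤ) = ((p : ℤ)) ^ (n.factorization p) * ((n / p ^ n.factorization p : ℕ) : ℤ) := by
      exact_mod_cast congrArg (Nat.cast : ℕ → ℤ) h1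
    rw [h3]
    push_cast
    ring
  rw [hsplit, norm_mul, norm_pow, Padic.norm_p, hnorm1, mul_one, inv_pow,
    ← zpow_natCast ((p : ℝ)) (n.factorization p), ← zpow_neg]

lemma norm_div_fact_le {t : ℤ} {k a w : ℕ} (hdvd : (p : ℤ) ^ a ∣ t)
    (hval : (k.factorial).factorization p + w ≤ a) :
    ‖(t : ℚ_[p]) / ((k.factorial : ℤ) : ℚ_[p])‖ ≤ (p : ℝ) ^ (-(w : ℤ)) := by
  have hp0 : (0 : ℝ) < p := by exact_mod_cast hp.out.pos
  have hp1 : (1 : ℝ) ≤ p := by exact_mod_cast hp.out.one_le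
  have hfact : ‖((k.factorial : ℤ) : ℚ_[p])‖ = (p : ℝ) ^ (-(k.factorial.factorization p : ℤ)) :=
    norm_natCast_eq _ (Nat.factorial_ne_zero k)
  rw [norm_div, hfact, div_le_iff₀ (by positivity)]
  calc ‖(t : ℚ_[p])‖ ≤ (p : ℝ) ^ (-(a : ℤ)) := norm_int_le hdvd
  _ ≤ (p : ℝ) ^ (-(w : ℤ) + -(k.factorial.factorization p : ℤ)) := by
      apply zpow_le_zpow_right₀ hp1
      omega
  _ = (p : ℝ) ^ (-(w : ℤ)) * (p : ℝ) ^ (-(k.factorial.factorization p : ℤ)) :=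
      zpow_add₀ (ne_of_gt hp0) _ _

lemma factval_zero {k : ℕ} (hk : k < p) : (k.factorial).factorization p = 0 :=
  Nat.factorization_eq_zero_of_not_dvd fun h =>
    absurd ((Nat.Prime.dvd_factorial hp.out).mp h) (by omega)

lemma factval_mul_le (k : ℕ) : (p - 1) * (k.factorial).factorization p ≤ k := by
  rw [Nat.factorization_def _ hp.out]
  have := sub_one_mul_padicValNat_factorial (p := p) k
  omega

lemma factval_le_sub {d k : ℕ} (hd : 0 < d) (hpd : d + 1 < p) (hk : d ≤ k) :
    (k.factorial).factorization p ≤ k - d := by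
  have h1 := factval_mul_le (p := p) k
  rcases Nat.eq_or_lt_of_le hk with rfl | hlt
  · have h0 : (d.factorial).factorization p = 0 := factval_zero (show d < p by omega)
    omega
  · by_contra hcon
    push_neg at hcon
    have h2 : (d + 1) * (k - d + 1) ≤ (p - 1) * (k.factorial).factorization p :=
      Nat.mul_le_mul (by omega) (by omega)
    have h3 : k - d ≤ (d + 1) * (k - d) := Nat.le_mul_of_pos_left _ (by omega)
    have h4 : (d + 1) * (k - d + 1) = (d + 1) * (k - d) + (d + 1) := by ring
    omega

noncomputable def tauSeq (t : ℕ → ℤ) (k : ℕ) : ℚ_[p] := (t k : ℚ_[p]) / ((k.factorial : ℤ) : ℚ_[p])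

noncomputable def Qpoly (k : ℕ) : Polynomial ℤ :=
  ∏ i ∈ range k, (Polynomial.X - Polynomial.C (i : ℤ))

lemma Qpoly_natDegree (k : ℕ) : (Qpoly k).natDegree = k := by
  rw [Qpoly, Polynomial.natDegree_prod_of_monic _ _ fun i _ => Polynomial.monic_X_sub_C _,
    Finset.sum_congr rfl fun i (_ : i ∈ range k) => Polynomial.natDegree_X_sub_C (i : ℤ)]
  simp

lemma Qpoly_eval_nat (n k : ℕ) :
    (Qpoly k).eval (n : ℤ) = (k.factorial : ℤ) * (n.choose k : ℤ) := by
  rcases Nat.lt_or_ge n k with h | h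
  · rw [Nat.choose_eq_zero_of_lt h, Qpoly, Polynomial.eval_prod,
      Finset.prod_eq_zero (Finset.mem_range.mpr h) (by simp)]
    ring
  · have h1 : (Qpoly k).eval (n : ℤ) = ((n.descFactorial k : ℕ) : ℤ) := by
      rw [Qpoly, Polynomial.eval_prod, Nat.descFactorial_eq_prod_range, Nat.cast_prod]
      refine Finset.prod_congr rfl fun i hi => ?_
      rw [Polynomial.eval_sub, Polynomial.eval_X, Polynomial.eval_C,
        Nat.cast_sub ((lt_of_lt_of_le (Finset.mem_range.mp hi) h).le)]
    rw [h1, Nat.descFactorial_eq_factorial_mul_choose]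
    push_cast
    ring

noncomputable def cSeq (t : ℕ → ℤ) (j : ℕ) : ℚ_[p] :=
  ∑' k, tauSeq t k * (((Qpoly k).coeff j : ℤ) : ℚ_[p])

theorem few_zeros_of_binom_rep (d : ℕ) (hd : 0 < d) (hpd : d + 1 < p)
    (t : ℕ → ℤ) (v : ℕ → ℤ)
    (hv : ∀ n, v n = ∑ k ∈ range (n + 1), (n.choose k : ℤ) * t k)
    (hpk : ∀ k, (p : ℤ) ^ k ∣ t k)
    (μ : ℕ)
    (hall : ∀ k, (p : ℤ) ^ μ ∣ t k)
    (htail : ∀ k, d ≤ k → (p : ℤ) ^ (μ + (k - d) + 1) ∣ t k)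
    (hmin : ∃ j, j < d ∧ ¬ (p : ℤ) ^ (μ + 1) ∣ t j) :
    {n : ℕ | v n = 0}.Finite ∧ {n : ℕ | v n = 0}.ncard ≤ d - 1 := by
  classical
  have hp0 : (0 : ℝ) < p := by exact_mod_cast hp.out.pos
  have hp1 : (1 : ℝ) < p := by exact_mod_cast hp.out.one_lt
  -- norms of tau
  have hτd : ∀ k, d ≤ k → ‖tauSeq (p := p) t k‖ ≤ (p : ℝ) ^ (-(μ : ℤ) - 1) := by
    intro k hk
    have h := norm_div_fact_le (p := p) (htail k hk)
      (show (k.factorial).factorization p + (μ + 1) ≤ μ + (k - d) + 1 by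
        have := factval_le_sub (p := p) hd hpd hk
        omega)
    refine le_of_le_of_eq h ?_
    congr 1
    push_cast
    ring
  have hτall : ∀ k, ‖tauSeq (p := p) t k‖ ≤ (p : ℝ) ^ (-(μ : ℤ)) := by
    intro k
    rcases Nat.lt_or_ge k d with h | h
    · exact norm_div_fact_le (p := p) (hall k) (by rw [factval_zero (by omega)]; omega)
    · exact (hτd k h).trans (zpow_le_zpow_right₀ (le_of_lt hp1) (by omega))
  have hτdec : ∀ ε : ℝ, 0 < ε → ∃ J, ∀ k, J ≤ k → ‖tauSeq (p := p) t k‖ ≤ ε := by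
    intro ε hε
    obtain ⟨m, hm⟩ := exists_pow_lt_of_lt_one hε
      (show (p : ℝ)⁻¹ < 1 by rw [inv_lt_one_iff₀]; right; exact hp1)
    have hm' : (p : ℝ) ^ (-(m : ℤ)) < ε := by
      rw [zpow_neg, zpow_natCast]
      rw [inv_pow] at hm
      exact hm
    refine ⟨2 * m, fun k hk => ?_⟩
    have he2 : 2 * (k.factorial).factorization p ≤ k := by
      have h1 := factval_mul_le (p := p) k
      have h2 : 2 * (k.factorial).factorization p ≤ (p - 1) * (k.factorial).factorization p :=
        Nat.mul_le_mul (by omega) (Nat.le_refl _)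
      omega
    have h := norm_div_fact_le (p := p) (hpk k)
      (show (k.factorial).factorization p + (k - (k.factorial).factorization p) ≤ k by omega)
    refine h.trans (le_trans ?_ (le_of_lt hm'))
    apply zpow_le_zpow_right₀ (le_of_lt hp1)
    omega
  -- coefficients
  have hterm_le : ∀ k j, ‖tauSeq (p := p) t k * (((Qpoly k).coeff j : ℤ) : ℚ_[p])‖
      ≤ ‖tauSeq (p := p) t k‖ := by
    intro k j
    rw [norm_mul]
    calc ‖tauSeq (p := p) t k‖ * ‖(((Qpoly k).coeff j : ℤ) : ℚ_[p])‖
        ≤ ‖tauSeq (p := p) t k‖ * 1 := by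
          gcongr
          exact Padic.norm_int_le_one _
    _ = _ := mul_one _
  have hSzero : ∀ k j, k < j → (Qpoly k).coeff j = 0 := fun k j h =>
    Polynomial.coeff_eq_zero_of_natDegree_lt (by rw [Qpoly_natDegree]; exact h)
  have hnorm_nat : ∀ n : ℕ, ‖((n : ℚ_[p]))‖ ≤ 1 := by
    intro n
    rw [show ((n : ℚ_[p])) = (((n : ℤ)) : ℚ_[p]) by push_cast; ring]
    exact Padic.norm_int_le_one _
  -- representation
  have hrepr : ∀ y : ℚ_[p], ‖y‖ ≤ 1 →
      ∑' j, cSeq t j * y ^ j = ∑' k, tauSeq (p := p) t k * (Polynomial.aeval y (Qpoly k)) := by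
    intro y hy
    have hT : ∀ k j, ‖tauSeq (p := p) t k * (((Qpoly k).coeff j : ℤ) : ℚ_[p]) * y ^ j‖
        ≤ ‖tauSeq (p := p) t k‖ := fun k j => (norm_mul_pow_le hy j).trans (hterm_le k j)
    have huncur : Summable (Function.uncurry fun k j =>
        tauSeq (p := p) t k * (((Qpoly k).coeff j : ℤ) : ℚ_[p]) * y ^ j) := by
      apply summable_of_norm_vanish
      intro ε hε
      obtain ⟨J, hJ⟩ := hτdec (ε / 2) (by linarith)
      refine ((Set.finite_Iio J).prod (Set.finite_Iio J)).subset ?_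
      rintro ⟨k, j⟩ hkj
      simp only [Set.mem_setOf_eq, Function.uncurry_apply_pair] at hkj
      by_contra hout
      simp only [Set.mem_prod, Set.mem_Iio, not_and_or, not_lt] at hout
      have hk : J ≤ k ∨ k < j := by
        rcases hout with h | h
        · exact Or.inl h
        · rcases Nat.lt_or_ge k j with h2 | h2
          · exact Or.inr h2
          · exact Or.inl (le_trans h h2)
      rcases hk with h | h
      · have := hkj.trans ((hT k j).trans (hJ k h))
        linarith
      · rw [hSzero k j h] at hkj
        simp only [Int.cast_zero, mul_zero, zero_mul, norm_zero] at hkj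
        linarith
    have hrows : ∀ k, Summable fun j =>
        tauSeq (p := p) t k * (((Qpoly k).coeff j : ℤ) : ℚ_[p]) * y ^ j := by
      intro k
      refine summable_of_ne_finset_zero (s := range (k + 1)) fun j hj => ?_
      rw [hSzero k j (by simpa using hj)]
      simp
    have hcols : ∀ j, Summable fun k =>
        tauSeq (p := p) t k * (((Qpoly k).coeff j : ℤ) : ℚ_[p]) * y ^ j := by
      intro j
      apply summable_of_norm_vanish
      intro ε hε
      obtain ⟨J, hJ⟩ := hτdec (ε / 2) (by linarith)
      refine (Set.finite_Iio J).subset fun k hk => ?_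
      simp only [Set.mem_setOf_eq] at hk
      by_contra hout
      simp only [Set.mem_Iio, not_lt] at hout
      have := hk.trans ((hT k j).trans (hJ k hout))
      linarith
    calc ∑' j, cSeq t j * y ^ j
        = ∑' j, ∑' k, tauSeq (p := p) t k * (((Qpoly k).coeff j : ℤ) : ℚ_[p]) * y ^ j := by
          refine tsum_congr fun j => ?_
          rw [cSeq, ← tsum_mul_right]
    _ = ∑' k, ∑' j, tauSeq (p := p) t k * (((Qpoly k).coeff j : ℤ) : ℚ_[p]) * y ^ j :=
          Summable.tsum_comm' huncur hrows hcols
    _ = ∑' k, tauSeq (p := p) t k * (Polynomial.aeval y (Qpoly k)) := by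
          refine tsum_congr fun k => ?_
          rw [tsum_eq_sum (s := range (k + 1)) (fun j hj => by
            rw [hSzero k j (by simpa using hj)]; simp)]
          rw [Polynomial.aeval_eq_sum_range' (n := k + 1) (by rw [Qpoly_natDegree]; omega) y,
            Finset.mul_sum]
          refine Finset.sum_congr rfl fun j hj => ?_
          rw [zsmul_eq_mul]
          ring
  -- values at naturals
  have hval : ∀ n : ℕ, ∑' j, cSeq t j * ((n : ℚ_[p])) ^ j = ((v n : ℤ) : ℚ_[p]) := by
    intro n
    rw [hrepr _ (hnorm_nat n)]
    have hterm : ∀ k, tauSeq (p := p) t k * (Polynomial.aeval ((n : ℚ_[p])) (Qpoly k))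
        = ((n.choose k : ℤ) : ℚ_[p]) * ((t k : ℤ) : ℚ_[p]) := by
      intro k
      have h1 : (Polynomial.aeval ((n : ℚ_[p]))) (Qpoly k)
          = ((((Qpoly k).eval ((n : ℤ))) : ℤ) : ℚ_[p]) := by
        rw [Polynomial.aeval_def,
          show ((n : ℚ_[p])) = (Int.castRingHom ℚ_[p]) ((n : ℤ)) by simp,
          show algebraMap ℤ ℚ_[p] = Int.castRingHom ℚ_[p] from algebraMap_int_eq ℚ_[p]]
        exact Polynomial.eval₂_at_apply _ _
      rw [h1, Qpoly_eval_nat n k]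
      have hfne : ((k.factorial : ℤ) : ℚ_[p]) ≠ 0 := by
        have : (k.factorial : ℤ) ≠ 0 := Int.natCast_ne_zero.mpr (Nat.factorial_ne_zero k)
        exact_mod_cast this
      have hfne' : ((k.factorial : ℚ_[p])) ≠ 0 :=
        Nat.cast_ne_zero.mpr (Nat.factorial_ne_zero k)
      rw [tauSeq]
      push_cast
      field_simp
    rw [tsum_congr hterm,
      tsum_eq_sum (s := range (n + 1)) (fun k hk => by
        rw [Nat.choose_eq_zero_of_lt (by simpa using hk)]
        simp)]
    rw [hv n]
    push_cast
    ring
  -- endgame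
  set r : ℝ := (p : ℝ) ^ (-(μ : ℤ)) with hrdef
  have hr : 0 < r := by positivity
  have hrp : r / p = (p : ℝ) ^ (-(μ : ℤ) - 1) := by
    rw [hrdef, zpow_sub₀ (ne_of_gt hp0), zpow_one]
  have hc_le : ∀ j, ‖cSeq (p := p) t j‖ ≤ r := fun j =>
    norm_tsum_le _ (le_of_lt hr) fun k => (hterm_le k j).trans (hτall k)
  have hc_d : ∀ j, d ≤ j → ‖cSeq (p := p) t j‖ ≤ r / p := by
    intro j hj
    rw [hrp]
    refine norm_tsum_le _ (by positivity) fun k => ?_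
    rcases Nat.lt_or_ge k j with h | h
    · rw [hSzero k j h]
      simp only [Int.cast_zero, mul_zero, norm_zero]
      positivity
    · exact (hterm_le k j).trans (hτd k (le_trans hj h))
  have hc_dec : ∀ ε : ℝ, 0 < ε → ∃ J, ∀ j, J ≤ j → ‖cSeq (p := p) t j‖ ≤ ε := by
    intro ε hε
    obtain ⟨J, hJ⟩ := hτdec ε hε
    refine ⟨J, fun j hj => norm_tsum_le _ (le_of_lt hε) fun k => ?_⟩
    rcases Nat.lt_or_ge k j with h | h
    · rw [hSzero k j h]
      simp only [Int.cast_zero, mul_zero, norm_zero]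
      exact le_of_lt hε
    · exact (hterm_le k j).trans (hJ k (le_trans hj h))
  by_cases hex : ∃ j, j < d ∧ ‖cSeq (p := p) t j‖ = r
  · set P : ℕ → Prop := fun j => ‖cSeq (p := p) t j‖ = r with hPdef
    set N := Nat.findGreatest P (d - 1) with hNdef
    obtain ⟨j1, hj1d, hj1⟩ := hex
    have hPN : P N := Nat.findGreatest_spec (P := P) (m := j1) (by omega) (show P j1 from hj1)
    have hNd : N ≤ d - 1 := Nat.findGreatest_le _
    have htailN : ∀ j, N < j → ‖cSeq (p := p) t j‖ ≤ r / p := by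
      intro j hj
      rcases Nat.lt_or_ge j d with h | h
      · have hne : ‖cSeq (p := p) t j‖ ≠ r := by
          intro heq
          have := Nat.le_findGreatest (P := P) (m := j) (n := d - 1) (by omega) (show P j from heq)
          omega
        have hlt : ‖cSeq (p := p) t j‖ < r := lt_of_le_of_ne (hc_le j) hne
        rw [hrp]
        exact norm_le_pow_pred_of_lt hlt
      · exact hc_d j h
    obtain ⟨hfin, hcard⟩ := strassmann N (cSeq t) r hr hc_dec hc_le htailN hPN
    have hmap : {n : ℕ | v n = 0} ⊆ (fun n : ℕ => ((n : ℚ_[p]))) ⁻¹' (zeroSet (cSeq t)) := by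
      intro n hn
      simp only [Set.mem_setOf_eq] at hn
      refine ⟨hnorm_nat n, ?_⟩
      rw [hval n, hn]
      simp
    have hinj : Function.Injective fun n : ℕ => ((n : ℚ_[p])) := fun a b h =>
      Nat.cast_injective h
    constructor
    · exact ((hfin.preimage hinj.injOn)).subset hmap
    · calc {n : ℕ | v n = 0}.ncard
          = ((fun n : ℕ => ((n : ℚ_[p]))) '' {n | v n = 0}).ncard :=
            (Set.ncard_image_of_injective _ hinj).symm
      _ ≤ (zeroSet (cSeq t)).ncard := by
            refine Set.ncard_le_ncard ?_ hfin
            rintro _ ⟨n, hn, rfl⟩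
            exact hmap hn
      _ ≤ N := hcard
      _ ≤ d - 1 := hNd
  · push_neg at hex
    exfalso
    have hsmall : ∀ j, ‖cSeq (p := p) t j‖ ≤ r / p := by
      intro j
      rcases Nat.lt_or_ge j d with h | h
      · have hlt : ‖cSeq (p := p) t j‖ < r := lt_of_le_of_ne (hc_le j) (hex j h)
        rw [hrp]
        exact norm_le_pow_pred_of_lt hlt
      · exact hc_d j h
    have hvdvd : ∀ n : ℕ, (p : ℤ) ^ (μ + 1) ∣ (v n) := by
      intro n
      have h1 : ‖((v n : ℤ) : ℚ_[p])‖ ≤ (p : ℝ) ^ (-((μ + 1 : ℕ) : ℤ)) := by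
        rw [← hval n]
        have heq : (p : ℝ) ^ (-((μ + 1 : ℕ) : ℤ)) = r / p := by
          rw [hrp]
          congr 1
          push_cast
          ring
        rw [heq]
        exact norm_tsum_le _ (by positivity) fun j =>
          (norm_mul_pow_le (hnorm_nat n) j).trans (hsmall j)
      exact (Padic.norm_int_le_pow_iff_dvd _ _).mp h1
    have hdvd_t : ∀ k, (p : ℤ) ^ (μ + 1) ∣ t k := by
      intro k
      induction k using Nat.strong_induction_on with
      | _ k IH =>
        have hk : t k = v k - ∑ k' ∈ range k, (k.choose k' : ℤ) * t k' := by
          rw [hv k, Finset.sum_range_succ, Nat.choose_self]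
          push_cast
          ring
        rw [hk]
        exact dvd_sub (hvdvd k) (Finset.dvd_sum fun k' hk' =>
          Dvd.dvd.mul_left (IH k' (mem_range.mp hk')) _)
    obtain ⟨j0, hj0d, hj0⟩ := hmin
    exact hj0 (hdvd_t j0)

lemma sum_mulVec {ι : Type*} {d : ℕ} (s : Finset ι) (F : ι → Matrix (Fin d) (Fin d) ℤ)
    (x : Fin d → ℤ) : (∑ k ∈ s, F k).mulVec x = ∑ k ∈ s, (F k).mulVec x := by
  classical
  induction s using Finset.cons_induction with
  | empty => simp [Matrix.zero_mulVec]
  | cons k s hk ih => rw [Finset.sum_cons, Finset.sum_cons, Matrix.add_mulVec, ih]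

lemma pow_eq_lin_combo {d : ℕ} (hd : 0 < d) (B : Matrix (Fin d) (Fin d) ℤ) (k : ℕ) :
    ∃ e : Fin d → ℤ, B ^ (d + k) = ∑ j : Fin d, e j • B ^ (j : ℕ) := by
  classical
  have hch := Matrix.aeval_self_charpoly B
  have hmonic : B.charpoly.Monic := B.charpoly_monic
  have hdeg : B.charpoly.natDegree = d := by
    rw [Matrix.charpoly_natDegree_eq_dim]
    simp
  set f : Polynomial ℤ := Polynomial.X ^ (d + k) with hf
  have hsplit : f %ₘ B.charpoly + B.charpoly * (f /ₘ B.charpoly) = f :=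
    Polynomial.modByMonic_add_div f B.charpoly
  have h2 : (Polynomial.aeval B) f = (Polynomial.aeval B) (f %ₘ B.charpoly) := by
    conv_lhs => rw [← hsplit]
    rw [map_add, map_mul, hch, zero_mul, add_zero]
  have hdeglt : (f %ₘ B.charpoly).natDegree < d := by
    rcases eq_or_ne (f %ₘ B.charpoly) 0 with h0 | h0
    · rw [h0]
      simpa using hd
    · have h1 := Polynomial.degree_modByMonic_lt f hmonic
      rw [Polynomial.degree_eq_natDegree hmonic.ne_zero, hdeg] at h1
      exact (Polynomial.natDegree_lt_iff_degree_lt h0).mpr h1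
  refine ⟨fun j => (f %ₘ B.charpoly).coeff (j : ℕ), ?_⟩
  have h3 : B ^ (d + k) = (Polynomial.aeval B) f := by
    rw [hf]
    simp
  rw [h3, h2, Polynomial.aeval_eq_sum_range' hdeglt B, ← Fin.sum_univ_eq_sum_range]


end LRSAux

open LRSAux

/-- Let `u` satisfy an order-`d` integer linear recurrence, `p > d+1` a prime
not dividing `a_0`, `A` the companion matrix and `M > 0` with `A^M ≡ I (mod p)`.  Then for every
`ℓ < M`, either `u (M*n+ℓ) = 0` for all `n`, or `{n : u (M*n+ℓ) = 0}` has at most `d − 1`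
elements. -/
theorem lrs_subsequence_few_zeros (p d : ℕ) (hp : p.Prime) (hd : 0 < d)
    (hpd : d + 1 < p) (a : Fin d → ℤ) (u : ℕ → ℤ)
    (hrec : ∀ n : ℕ, u (n + d) = ∑ i : Fin d, a i * u (n + i))
    (ha0 : ¬ ((p : ℤ) ∣ a ⟨0, hd⟩))
    (M : ℕ) (hM : 0 < M)
    (hAM : ∀ i j, (p : ℤ) ∣ ((companionMatrix a) ^ M - 1) i j) :
    ∀ ℓ < M, (∀ n : ℕ, u (M * n + ℓ) = 0) ∨
      ({n : ℕ | u (M * n + ℓ) = 0}.Finite ∧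
        {n : ℕ | u (M * n + ℓ) = 0}.ncard ≤ d - 1) := by
  intro ℓ hℓ
  haveI : Fact p.Prime := ⟨hp⟩
  classical
  set A := companionMatrix a with hA
  set B : Matrix (Fin d) (Fin d) ℤ := Matrix.of (fun i j => ((A ^ M - 1) i j) / p) with hB
  have hCB : A ^ M = 1 + (p : ℤ) • B := by
    ext i j
    have hdvd := hAM i j
    simp only [hB, Matrix.add_apply, Matrix.smul_apply, Matrix.of_apply, smul_eq_mul]
    rw [Int.mul_ediv_cancel' hdvd]
    simp only [Matrix.sub_apply]
    ring
  have hlast : d - 1 < d := by omega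
  set X : ℕ → Fin d → ℤ := fun m i => u (m + (d - 1 - (i : ℕ))) with hX
  -- the recurrence step
  have hstep : ∀ m, A.mulVec (X m) = X (m + 1) := by
    intro m
    funext i
    rw [Matrix.mulVec, dotProduct]
    rcases Nat.eq_zero_or_pos (i : ℕ) with hi0 | hipos
    · have hAij : ∀ j : Fin d, A i j = a j.rev := by
        intro j
        rw [hA]
        simp only [companionMatrix, Matrix.of_apply, hi0, if_true]
      have hXi : X (m + 1) i = u (m + d) := by
        rw [hX]
        simp only
        congr 1
        omega
      rw [hXi]
      have hterm : ∀ j : Fin d, A i j * X m j = a j.rev * u (m + (d - 1 - (j : ℕ))) := by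
        intro j
        rw [hAij j, hX]
      rw [Finset.sum_congr rfl fun j _ => hterm j]
      have hre : ∀ i₀ : Fin d,
          a (Fin.rev i₀).rev * u (m + (d - 1 - ((Fin.rev i₀) : ℕ))) = a i₀ * u (m + (i₀ : ℕ)) := by
        intro i₀
        rw [Fin.rev_rev]
        congr 2
        have h1 : ((Fin.rev i₀) : ℕ) = d - (i₀ + 1) := Fin.val_rev i₀
        have h2 : (i₀ : ℕ) < d := i₀.isLt
        omega
      calc ∑ j : Fin d, a j.rev * u (m + (d - 1 - (j : ℕ)))
          = ∑ i₀ : Fin d, a (Fin.rev i₀).rev * u (m + (d - 1 - ((Fin.rev i₀) : ℕ))) :=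
            (Equiv.sum_comp Fin.revPerm
              (fun j => a j.rev * u (m + (d - 1 - (j : ℕ))))).symm
      _ = ∑ i₀ : Fin d, a i₀ * u (m + (i₀ : ℕ)) := Finset.sum_congr rfl fun i₀ _ => hre i₀
      _ = u (m + d) := (hrec m).symm
    · set j₀ : Fin d := ⟨(i : ℕ) - 1, by omega⟩ with hj₀
      have hval : A i j₀ * X m j₀ = u (m + 1 + (d - 1 - (i : ℕ))) := by
        rw [hA, hX]
        simp only [companionMatrix, Matrix.of_apply]
        rw [if_neg (by omega), if_pos (show ((j₀ : Fin d) : ℕ) + 1 = (i : ℕ) by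
          show (i : ℕ) - 1 + 1 = (i : ℕ)
          omega)]
        rw [one_mul]
        congr 1
        have : (j₀ : ℕ) = (i : ℕ) - 1 := rfl
        have h2 : (i : ℕ) < d := i.isLt
        omega
      rw [Finset.sum_eq_single j₀ ?hz ?hmem]
      · rw [hval, hX]
      case hz =>
        intro b _ hb
        rw [hA]
        simp only [companionMatrix, Matrix.of_apply]
        rw [if_neg (by omega), if_neg ?hne, zero_mul]
        case hne =>
          intro hcontra
          apply hb
          exact Fin.ext (show (b : ℕ) = ((i : ℕ) - 1) by omega)
      case hmem =>
        intro hcontra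
        exact absurd (Finset.mem_univ j₀) hcontra
  have hpowvec : ∀ n m, (A ^ n).mulVec (X m) = X (m + n) := by
    intro n
    induction n with
    | zero =>
      intro m
      simp [Matrix.one_mulVec]
    | succ n ih =>
      intro m
      rw [pow_succ, ← Matrix.mulVec_mulVec, hstep m, ih (m + 1)]
      have h9 : m + 1 + n = m + (n + 1) := by omega
      rw [h9]
  set lastIdx : Fin d := ⟨d - 1, hlast⟩ with hlastIdx
  have hvrep : ∀ n, u (M * n + ℓ) = (((A ^ M) ^ n).mulVec (X ℓ)) lastIdx := by
    intro n
    rw [← pow_mul, hpowvec (M * n) ℓ]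
    show u (M * n + ℓ) = u (ℓ + M * n + (d - 1 - (d - 1)))
    congr 1
    omega
  -- expansion of (A^M)^n
  have hCn : ∀ n, (A ^ M) ^ n
      = ∑ k ∈ range (n + 1), ((n.choose k : ℤ) * (p : ℤ) ^ k) • B ^ k := by
    intro n
    rw [hCB, add_comm]
    rw [Commute.add_pow (Commute.one_right _) n]
    refine Finset.sum_congr rfl fun k hk => ?_
    have h1 : ((n.choose k : ℕ) : Matrix (Fin d) (Fin d) ℤ)
        = (n.choose k : ℤ) • (1 : Matrix (Fin d) (Fin d) ℤ) := by
      rw [zsmul_eq_mul, mul_one]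
      norm_cast
    rw [one_pow, mul_one, smul_pow, h1, mul_smul_comm, mul_one, smul_smul]
  have hvform : ∀ n, u (M * n + ℓ)
      = ∑ k ∈ range (n + 1), (n.choose k : ℤ)
          * ((p : ℤ) ^ k * ((B ^ k).mulVec (X ℓ)) lastIdx) := by
    intro n
    rw [hvrep n, hCn n, sum_mulVec, Finset.sum_apply]
    refine Finset.sum_congr rfl fun k hk => ?_
    rw [Matrix.smul_mulVec]
    simp only [Pi.smul_apply, smul_eq_mul]
    ring
  -- Cayley-Hamilton for entries
  have hwlin : ∀ k, ∃ e : Fin d → ℤ, ((B ^ (d + k)).mulVec (X ℓ)) lastIdx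
      = ∑ j : Fin d, e j * ((B ^ (j : ℕ)).mulVec (X ℓ)) lastIdx := by
    intro k
    obtain ⟨e, he⟩ := pow_eq_lin_combo hd B k
    refine ⟨e, ?_⟩
    rw [he, sum_mulVec, Finset.sum_apply]
    refine Finset.sum_congr rfl fun j _ => ?_
    rw [Matrix.smul_mulVec]
    simp only [Pi.smul_apply, smul_eq_mul]
  by_cases hw0 : ∀ j : ℕ, j < d → ((B ^ j).mulVec (X ℓ)) lastIdx = 0
  · left
    have hwall : ∀ k, ((B ^ k).mulVec (X ℓ)) lastIdx = 0 := by
      intro k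
      rcases Nat.lt_or_ge k d with h | h
      · exact hw0 k h
      · obtain ⟨e, he⟩ := hwlin (k - d)
        have hkk : d + (k - d) = k := by omega
        rw [hkk] at he
        rw [he]
        exact Finset.sum_eq_zero fun j _ => by rw [hw0 (j : ℕ) j.isLt, mul_zero]
    intro n
    rw [hvform n]
    exact Finset.sum_eq_zero fun k _ => by rw [hwall k, mul_zero, mul_zero]
  · right
    push_neg at hw0
    obtain ⟨j1, hj1d, hj1⟩ := hw0
    set w : ℕ → ℤ := fun k => ((B ^ k).mulVec (X ℓ)) lastIdx with hw
    set tseq : ℕ → ℤ := fun k => (p : ℤ) ^ k * w k with ht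
    have hpne : (p : ℤ) ≠ 0 := Int.natCast_ne_zero.mpr hp.pos.ne'
    have htj1 : tseq j1 ≠ 0 := by
      show (p : ℤ) ^ j1 * ((B ^ j1).mulVec (X ℓ)) lastIdx ≠ 0
      exact mul_ne_zero (pow_ne_zero _ hpne) hj1
    -- define μ as the minimum valuation among nonzero t j, j < d
    have hSne : (((range d).filter (fun j => tseq j ≠ 0)).image
        (fun j => (tseq j).natAbs.factorization p)).Nonempty := by
      refine Finset.Nonempty.image ⟨j1, ?_⟩ _
      rw [Finset.mem_filter, Finset.mem_range]
      exact ⟨hj1d, htj1⟩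
    set μ := (((range d).filter (fun j => tseq j ≠ 0)).image
        (fun j => (tseq j).natAbs.factorization p)).min' hSne with hμ
    have hdvd_iff : ∀ (z : ℤ), z ≠ 0 → ∀ m : ℕ,
        ((p : ℤ) ^ m ∣ z ↔ m ≤ z.natAbs.factorization p) := by
      intro z hz m
      rw [show ((p : ℤ) ^ m) = ((p ^ m : ℕ) : ℤ) by push_cast; ring]
      rw [Int.natCast_dvd]
      exact Nat.Prime.pow_dvd_iff_le_factorization hp (Int.natAbs_ne_zero.mpr hz)
    have hall_lt : ∀ k, k < d → (p : ℤ) ^ μ ∣ tseq k := by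
      intro k hk
      rcases eq_or_ne (tseq k) 0 with h0 | h0
      · rw [h0]
        exact dvd_zero _
      · rw [hdvd_iff _ h0]
        apply Finset.min'_le
        exact Finset.mem_image_of_mem _ (Finset.mem_filter.mpr ⟨Finset.mem_range.mpr hk, h0⟩)
    have htrel : ∀ m, ∃ e : Fin d → ℤ,
        tseq (d + m) = ∑ j : Fin d, e j * ((p : ℤ) ^ (d + m - (j : ℕ)) * tseq (j : ℕ)) := by
      intro m
      obtain ⟨e, he⟩ := hwlin m
      refine ⟨e, ?_⟩
      show (p : ℤ) ^ (d + m) * ((B ^ (d + m)).mulVec (X ℓ)) lastIdx = _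
      rw [he, Finset.mul_sum]
      refine Finset.sum_congr rfl fun j _ => ?_
      have hsplit : (p : ℤ) ^ (d + m) = (p : ℤ) ^ (d + m - (j : ℕ)) * (p : ℤ) ^ (j : ℕ) := by
        rw [← pow_add]
        congr 1
        have := j.isLt
        omega
      rw [hsplit]
      ring
    have htail : ∀ k, d ≤ k → (p : ℤ) ^ (μ + (k - d) + 1) ∣ tseq k := by
      intro k hk
      obtain ⟨e, he⟩ := htrel (k - d)
      have hkk : d + (k - d) = k := by omega
      rw [hkk] at he
      rw [he]
      refine Finset.dvd_sum fun j _ => ?_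
      have hj := j.isLt
      have hsplit : (p : ℤ) ^ (k - (j : ℕ)) * (p : ℤ) ^ μ ∣
          (p : ℤ) ^ (k - (j : ℕ)) * tseq (j : ℕ) :=
        mul_dvd_mul_left _ (hall_lt _ hj)
      refine Dvd.dvd.mul_left ?_ (e j)
      refine dvd_trans ?_ hsplit
      rw [← pow_add]
      apply pow_dvd_pow
      omega
    have hall : ∀ k, (p : ℤ) ^ μ ∣ tseq k := by
      intro k
      rcases Nat.lt_or_ge k d with h | h
      · exact hall_lt k h
      · exact dvd_trans (pow_dvd_pow _ (by omega)) (htail k h)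
    have hmin : ∃ j, j < d ∧ ¬ (p : ℤ) ^ (μ + 1) ∣ tseq j := by
      obtain ⟨j0, hj0mem, hj0val⟩ := Finset.mem_image.mp (Finset.min'_mem _ hSne)
      rw [Finset.mem_filter, Finset.mem_range] at hj0mem
      refine ⟨j0, hj0mem.1, ?_⟩
      rw [hdvd_iff _ hj0mem.2, hj0val, ← hμ]
      omega
    have hpk : ∀ k, (p : ℤ) ^ k ∣ tseq k := fun k => ⟨w k, rfl⟩
    exact few_zeros_of_binom_rep d hd hpd tseq (fun n => u (M * n + ℓ)) hvform hpk μ hall htail hmin
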